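/- For every real x ≥ 1, I_{−1/2}(x) + I_{3/2}(x) < 0.798·x^{−1/2}·e^{x}; explicitly, √(2/(π·x))·(2·cosh(x) − sinh(x)/x) < 0.798·x^{−1/2}·e^{x}. -/

import Mathlib

open Real

theorem bessel_I_sum_bound_large (x : ℝ) (h1 : 1 ≤ x) :
    Real.sqrt (2 / (π * x)) * (2 * Real.cosh x - Real.sinh x / x) <
      0.798 * x ^ (-(1 : ℝ) / 2) * Real.exp x := by
  have hx : (0:ℝ) < x := lt_of_lt_of_le one_pos h1
  have hπ : (3.141592:ℝ) < π := pi_gt_d6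
  have hπ0 : (0:ℝ) < π := by linarith
  have hb : 0 < Real.exp (-x) := Real.exp_pos _
  have he : Real.exp (-x) * Real.exp x = 1 := by
    rw [← Real.exp_add]; simp
  have h2x : 2*x + 1 < Real.exp (2*x) := by
    have := Real.add_one_lt_exp (x := 2*x) (by positivity)
    linarith
  have hexp2 : Real.exp (2*x) = Real.exp x * Real.exp x := by
    rw [← Real.exp_add]; ring_nf
  have hs : Real.exp (-x) < Real.sinh x / x := by
    rw [lt_div_iff₀ hx, Real.sinh_eq]
    nlinarith [mul_lt_mul_of_pos_right h2x hb, he, hexp2, Real.exp_pos x]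
  have hA : 2 * Real.cosh x - Real.sinh x / x < Real.exp x := by
    have hc : 2 * Real.cosh x = Real.exp x + Real.exp (-x) := by
      rw [Real.cosh_eq]; ring
    linarith
  have hApos : 0 < 2 * Real.cosh x - Real.sinh x / x := by
    have h1' : Real.sinh x / x ≤ Real.sinh x :=
      div_le_self (Real.sinh_nonneg_iff.mpr hx.le) h1
    have h2' : Real.sinh x < Real.cosh x := Real.sinh_lt_cosh x
    have h3' : 0 < Real.cosh x := Real.cosh_pos x
    linarith
  have hsx : 0 < Real.sqrt x := Real.sqrt_pos.2 hx
  have hsqrt : Real.sqrt (2/(π*x)) ≤ 0.798 * x ^ (-(1:ℝ)/2) := by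
    have hx' : x ^ (-(1:ℝ)/2) = (Real.sqrt x)⁻¹ := by
      rw [show (-(1:ℝ)/2) = -(1/2) by ring, Real.rpow_neg hx.le, ← Real.sqrt_eq_rpow]
    rw [hx', show 2/(π*x) = (2/π)/x by ring, Real.sqrt_div (by positivity) x,
      div_eq_mul_inv]
    have h2π : Real.sqrt (2/π) ≤ 0.798 := by
      rw [show (0.798:ℝ) = Real.sqrt (0.798^2) by rw [Real.sqrt_sq (by norm_num)]]
      apply Real.sqrt_le_sqrt
      rw [div_le_iff₀ hπ0]; nlinarith
    exact mul_le_mul_of_nonneg_right h2π (by positivity)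
  have hsp : 0 < Real.sqrt (2/(π*x)) := Real.sqrt_pos.2 (by positivity)
  calc Real.sqrt (2 / (π * x)) * (2 * Real.cosh x - Real.sinh x / x)
      < Real.sqrt (2 / (π * x)) * Real.exp x := by
        exact mul_lt_mul_of_pos_left hA hsp
    _ ≤ 0.798 * x ^ (-(1:ℝ)/2) * Real.exp x :=
        mul_le_mul_of_nonneg_right hsqrt (Real.exp_pos x).le
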